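/- Let f : U → ℝ^n (U ⊆ ℝ^n open and convex) be C¹ with ∂f_i/∂x_j ≥ 0 on U for all i ≠ j. Let p ∈ U with f_i(p) < 0 for all i. Then for any y ∈ U with y ≤ p componentwise and y_i = p_i for some i, we have f_i(y) < 0; i.e., the vector field points strictly into K₁(p) = {x ∈ U : x ≤ p} along its boundary. -/

import Mathlib

/-- Cooperative vector fields point strictly into `K₁(p) = {x : x ≤ p}` along
its boundary: if `f` is `C¹` on an open convex set `U` with nonnegative
off-diagonal partial derivatives, `f i p < 0` for all `i`, and `y ≤ p` with
`y i = p i` for some `i`, then `f i y < 0`. The partial derivatives are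
expressed via a derivative `f'` of `f` on `U`. -/
theorem cooperative_inflow_K1 {n : ℕ}
    (U : Set (Fin n → ℝ)) (hU : IsOpen U) (hUconv : Convex ℝ U)
    (f : (Fin n → ℝ) → (Fin n → ℝ))
    (f' : (Fin n → ℝ) → ((Fin n → ℝ) →L[ℝ] (Fin n → ℝ)))
    (hf : ∀ x ∈ U, HasFDerivAt f (f' x) x)
    (hf'cont : ContinuousOn f' U)
    (hcoop : ∀ x ∈ U, ∀ i j : Fin n, i ≠ j → 0 ≤ f' x (Pi.single j 1) i)
    (p : Fin n → ℝ) (hp : p ∈ U) (hfp : ∀ i, f p i < 0)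
    (y : Fin n → ℝ) (hy : y ∈ U) (hpy : y ≤ p)
    (i : Fin n) (hyi : y i = p i) :
    f y i < 0 := by
  set d : Fin n → ℝ := y - p with hd
  -- the directional derivative in direction d is nonpositive on U
  have hkey : ∀ x ∈ U, f' x d i ≤ 0 := by
    intro x hx
    have hdsum : d = ∑ j, d j • (Pi.single j (1:ℝ) : Fin n → ℝ) := by
      funext k
      simp [Pi.single_apply, Finset.sum_ite_eq']
    have : f' x d i = ∑ j, d j * f' x (Pi.single j (1:ℝ) : Fin n → ℝ) i := by
      conv_lhs => rw [hdsum]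
      rw [map_sum]
      simp
    rw [this]
    apply Finset.sum_nonpos
    intro j _
    rcases eq_or_ne j i with rfl | hji
    · have : d j = 0 := by simp [hd, hyi]
      simp [this]
    · exact mul_nonpos_of_nonpos_of_nonneg
        (by simp [hd, sub_nonpos.2 (hpy j)])
        (hcoop x hx i j (Ne.symm hji))
  set ℓ : ℝ → (Fin n → ℝ) := fun t => p + t • d with hℓ
  have hℓmem : ∀ t ∈ Set.Icc (0:ℝ) 1, ℓ t ∈ U := by
    intro t ht
    have : ℓ t = (1 - t) • p + t • y := by
      funext k
      simp [hℓ, hd]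
      ring
    rw [this]
    exact hUconv hp hy (by linarith [ht.2]) ht.1 (by ring)
  set g : ℝ → ℝ := fun t => f (ℓ t) i with hg
  have hgderiv : ∀ t ∈ Set.Icc (0:ℝ) 1, HasDerivAt g (f' (ℓ t) d i) t := by
    intro t ht
    have hℓd : HasDerivAt ℓ d t := by
      have h0 := ((hasDerivAt_id t).smul_const d).const_add p
      rw [one_smul] at h0
      exact h0
    have h1 : HasDerivAt (fun t => f (ℓ t)) (f' (ℓ t) d) t :=
      (hf _ (hℓmem t ht)).comp_hasDerivAt t hℓd
    have h2 := (ContinuousLinearMap.proj (R := ℝ) (φ := fun _ : Fin n => ℝ) i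
        ).hasFDerivAt.comp_hasDerivAt t h1
    exact h2
  have hanti : AntitoneOn g (Set.Icc (0:ℝ) 1) := by
    apply antitoneOn_of_deriv_nonpos (convex_Icc 0 1)
    · exact fun t ht => (hgderiv t ht).continuousAt.continuousWithinAt
    · intro t ht
      rw [interior_Icc] at ht
      exact (hgderiv t ⟨le_of_lt ht.1, le_of_lt ht.2⟩).differentiableAt.differentiableWithinAt
    · intro t ht
      rw [interior_Icc] at ht
      rw [(hgderiv t ⟨le_of_lt ht.1, le_of_lt ht.2⟩).deriv]
      exact hkey _ (hℓmem t ⟨le_of_lt ht.1, le_of_lt ht.2⟩)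
  have h01 : g 1 ≤ g 0 := hanti (by norm_num) (by norm_num) zero_le_one
  have hg0 : g 0 = f p i := by simp [hg, hℓ]
  have hg1 : g 1 = f y i := by simp [hg, hℓ, hd]
  rw [hg0, hg1] at h01
  exact lt_of_le_of_lt h01 (hfp i)
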